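/- For every pair (m,n) with 2m+n ≥ 1, there exists an (m,n)-colored mixed graph on (2m+n)² + (2m+n) + 1 vertices whose underlying graph is a partial 2-tree (K₄-minor-free) and in which every two distinct vertices are adjacent or joined by a special 2-path. -/

import Mathlib

/-- An `(m,n)`-colored mixed graph: a simple underlying graph together with a
labeling `lab` of ordered adjacent pairs.  Arcs get labels with absolute value in
`{1,...,m}` (reversal negates the label) and edges get labels in
`{m+1,...,m+n}` (reversal preserves the label).  Non-adjacent pairs get `0`. -/
structure CMG (V : Type) (m n : ℕ) where
  G : SimpleGraph V
  lab : V → V → ℤ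
  lab_eq_zero : ∀ ⦃u v : V⦄, ¬ G.Adj u v → lab u v = 0
  lab_mem : ∀ ⦃u v : V⦄, G.Adj u v →
    (1 ≤ lab u v ∧ lab u v ≤ (m : ℤ) + n) ∨ (-(m : ℤ) ≤ lab u v ∧ lab u v ≤ -1)
  lab_rev_arc : ∀ ⦃u v : V⦄, G.Adj u v → lab u v ≤ (m : ℤ) → lab v u = - lab u v
  lab_rev_edge : ∀ ⦃u v : V⦄, G.Adj u v → (m : ℤ) < lab u v → lab v u = lab u v

/-- `u` sees `v`: they are adjacent or joined by a special 2-path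
(a 2-path `u-w-v` with `lab u w ≠ lab v w`). -/
def CMG.sees {V : Type} {m n : ℕ} (H : CMG V m n) (u v : V) : Prop :=
  H.G.Adj u v ∨ ∃ w : V, H.G.Adj u w ∧ H.G.Adj v w ∧ H.lab u w ≠ H.lab v w

/-- `G` has an `H`-minor: disjoint nonempty connected branch sets indexed by the
vertices of `H`, with an edge of `G` between branch sets of adjacent vertices of `H`. -/
def HasMinor {V W : Type} (G : SimpleGraph V) (H : SimpleGraph W) : Prop :=
  ∃ B : W → Set V, (∀ i, (B i).Nonempty) ∧ Pairwise (Function.onFun Disjoint B) ∧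
    (∀ i, (G.induce (B i)).Connected) ∧
    ∀ ⦃i j : W⦄, H.Adj i j → ∃ u ∈ B i, ∃ v ∈ B j, G.Adj u v

/-- Planarity via Wagner's theorem: no `K₅` minor and no `K_{3,3}` minor. -/
def IsPlanar {V : Type} (G : SimpleGraph V) : Prop :=
  ¬ HasMinor G (SimpleGraph.completeGraph (Fin 5)) ∧
  ¬ HasMinor G (completeBipartiteGraph (Fin 3) (Fin 3))

namespace PTT

/-- Vertex type: `none` is the hub; `some (i, none)` is the center of star `i`;
`some (i, some j)` is leaf `j` of star `i`. -/
abbrev V (p : ℕ) := Option (Fin p × Option (Fin p))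

variable {p : ℕ} (m n : ℕ)

def f (t : ℕ) : ℤ :=
  if t < m then (t : ℤ) + 1 else if t < 2*m then (m : ℤ) - t - 1 else (t : ℤ) - m + 1

def g (t : ℕ) : ℤ :=
  if t < m then -((t : ℤ) + 1) else (t : ℤ) - m + 1

lemma fg (t : ℕ) :
    (f m t ≤ m ∧ g m t ≤ m ∧ g m t = - f m t) ∨ ((m : ℤ) < f m t ∧ g m t = f m t) := by
  unfold f g; split_ifs <;> omega

lemma f_mem (t : ℕ) (ht : t < 2*m + n) :
    (1 ≤ f m t ∧ f m t ≤ (m : ℤ) + n) ∨ (-(m : ℤ) ≤ f m t ∧ f m t ≤ -1) := by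
  unfold f; split_ifs <;> omega

lemma g_mem (t : ℕ) (ht : t < 2*m + n) :
    (1 ≤ g m t ∧ g m t ≤ (m : ℤ) + n) ∨ (-(m : ℤ) ≤ g m t ∧ g m t ≤ -1) := by
  unfold g; split_ifs <;> omega

lemma g_inj {s t : ℕ} (h : g m s = g m t) : s = t := by
  unfold g at h; split_ifs at h <;> omega

/-- Adjacency on `V p`. -/
def Rel : V p → V p → Prop
  | none, none => False
  | none, some _ => True
  | some _, none => True
  | some (i, none), some (j, some _) => i = j
  | some (i, some _), some (j, none) => i = j
  | some (_, none), some (_, none) => False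
  | some (_, some _), some (_, some _) => False

/-- Labels on `V p`. -/
def L : V p → V p → ℤ
  | none, none => 0
  | none, some (i, _) => f m (i : ℕ)
  | some (i, _), none => g m (i : ℕ)
  | some (i, none), some (j, some t) => if i = j then f m (t : ℕ) else 0
  | some (i, some t), some (j, none) => if i = j then g m (t : ℕ) else 0
  | some _, some _ => 0

lemma rel_symm : ∀ a b : V p, Rel a b → Rel b a := by
  rintro (_ | ⟨i, _ | t⟩) (_ | ⟨i', _ | t'⟩) h <;> simp_all [Rel] <;> omega

lemma rel_irrefl : ∀ a : V p, ¬ Rel a a := by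
  rintro (_ | ⟨i, _ | t⟩) h <;> simp_all [Rel]

lemma L_zero : ∀ a b : V p, ¬ Rel a b → L m a b = 0 := by
  rintro (_ | ⟨i, _ | t⟩) (_ | ⟨i', _ | t'⟩) h <;> simp_all [Rel, L]

lemma L_mem (hpn : p ≤ 2*m + n) : ∀ a b : V p, Rel a b →
    (1 ≤ L m a b ∧ L m a b ≤ (m : ℤ) + n) ∨ (-(m : ℤ) ≤ L m a b ∧ L m a b ≤ -1) := by
  rintro (_ | ⟨i, _ | t⟩) (_ | ⟨i', _ | t'⟩) h <;>
    simp_all [Rel, L] <;>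
    first
      | exact f_mem m n _ (lt_of_lt_of_le (Fin.is_lt _) hpn)
      | exact g_mem m n _ (lt_of_lt_of_le (Fin.is_lt _) hpn)

lemma L_rev_arc : ∀ a b : V p, Rel a b → L m a b ≤ (m : ℤ) → L m b a = - L m a b := by
  rintro (_ | ⟨i, _ | t⟩) (_ | ⟨i', _ | t'⟩) h <;>
    simp_all [Rel, L, f, g] <;> split_ifs <;> omega

lemma L_rev_edge : ∀ a b : V p, Rel a b → (m : ℤ) < L m a b → L m b a = L m a b := by
  rintro (_ | ⟨i, _ | t⟩) (_ | ⟨i', _ | t'⟩) h <;>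
    simp_all [Rel, L, f, g] <;> split_ifs <;> omega

/-- Star index of a vertex (hub gets an arbitrary index). -/
def idx (h0 : 0 < p) : V p → Fin p
  | none => ⟨0, h0⟩
  | some (i, _) => i

lemma rel_idx (h0 : 0 < p) : ∀ a b : V p, Rel a b → a ≠ none → b ≠ none →
    idx h0 a = idx h0 b := by
  rintro (_ | ⟨i, _ | t⟩) (_ | ⟨i', _ | t'⟩) h ha hb <;> simp_all [Rel, idx]

lemma rel_center (h0 : 0 < p) : ∀ a b : V p, Rel a b → a ≠ none → b ≠ none →
    a = some (idx h0 a, none) ∨ b = some (idx h0 b, none) := by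
  rintro (_ | ⟨i, _ | t⟩) (_ | ⟨i', _ | t'⟩) h ha hb <;> simp_all [Rel, idx]

lemma reach_eq {W α : Type*} (G : SimpleGraph W) (F : W → α) (A : Set W)
    (hF : ∀ u ∈ A, ∀ v ∈ A, G.Adj u v → F u = F v) :
    ∀ a b : A, (G.induce A).Reachable a b → F a.1 = F b.1 := by
  rintro a b ⟨w⟩
  induction w with
  | nil => rfl
  | @cons x y z h _ ih => exact (hF x.1 x.2 y.1 y.2 h).trans ih

lemma card_V : Fintype.card (V p) = p ^ 2 + p + 1 := by
  simp [V, Fintype.card_option, Fintype.card_prod]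
  ring


lemma sees_aux : ∀ a b : V p, a ≠ b →
    Rel a b ∨ ∃ c : V p, Rel a c ∧ Rel b c ∧ L m a c ≠ L m b c := by
  have gI : ∀ s t : Fin p, g m (s : ℕ) = g m (t : ℕ) → s = t :=
    fun s t h => Fin.val_injective (g_inj m h)
  rintro (_ | ⟨i, _ | t⟩) (_ | ⟨i', _ | t'⟩) hne
  · exact absurd rfl hne
  · exact Or.inl trivial
  · exact Or.inl trivial
  · exact Or.inl trivial
  · have hii : i ≠ i' := by simpa using hne
    exact Or.inr ⟨none, trivial, trivial, by
      simpa [L] using fun h => hii (gI _ _ h)⟩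
  · by_cases hii : i = i'
    · exact Or.inl hii
    · exact Or.inr ⟨none, trivial, trivial, by
        simpa [L] using fun h => hii (gI _ _ h)⟩
  · exact Or.inl trivial
  · by_cases hii : i = i'
    · exact Or.inl hii
    · exact Or.inr ⟨none, trivial, trivial, by
        simpa [L] using fun h => hii (gI _ _ h)⟩
  · by_cases hii : i = i'
    · subst hii
      have htt : t ≠ t' := by simpa using hne
      exact Or.inr ⟨some (i, none), rfl, rfl, by
        simpa [L] using fun h => htt (gI _ _ h)⟩
    · exact Or.inr ⟨none, trivial, trivial, by
        simpa [L] using fun h => hii (gI _ _ h)⟩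

end PTT

open PTT in
theorem exists_partial_two_tree_absolute_clique (m n : ℕ) (hp : 1 ≤ 2 * m + n) :
    ∃ H : CMG (Fin ((2 * m + n) ^ 2 + (2 * m + n) + 1)) m n,
      ¬ HasMinor H.G (SimpleGraph.completeGraph (Fin 4)) ∧
      ∀ u v : Fin ((2 * m + n) ^ 2 + (2 * m + n) + 1), u ≠ v → H.sees u v := by
  set p := 2 * m + n with hpdef
  have h0 : 0 < p := hp
  have hcard : Fintype.card (V p) = p ^ 2 + p + 1 := card_V
  set N := p ^ 2 + p + 1 with hN
  let e : Fin N ≃ V p := (Fintype.equivFinOfCardEq hcard).symm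
  have he : ∀ a : V p, e (e.symm a) = a := fun a => e.apply_symm_apply a
  refine ⟨{ G := { Adj := fun u v => Rel (e u) (e v),
                   symm := ⟨fun u v h => rel_symm _ _ h⟩,
                   loopless := ⟨fun u h => rel_irrefl _ h⟩ },
            lab := fun u v => L m (e u) (e v),
            lab_eq_zero := fun u v h => L_zero m _ _ h,
            lab_mem := fun u v h => L_mem m n le_rfl _ _ h,
            lab_rev_arc := fun u v h h' => L_rev_arc m _ _ h h',
            lab_rev_edge := fun u v h h' => L_rev_edge m _ _ h h' }, ?_, ?_⟩
  · -- no K4 minor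
    rintro ⟨B, hne, hdisj, hconn, hadj⟩
    have hd : ∀ i j : Fin 4, i ≠ j → ∀ w, w ∈ B i → w ∈ B j → False :=
      fun i j hij w hi hj => Set.disjoint_left.mp (hdisj hij) hi hj
    set x₀ : Fin N := e.symm none with hx₀
    have hxne : ∀ u : Fin N, u ≠ x₀ → e u ≠ none := by
      intro u hu h
      exact hu (by rw [← e.symm_apply_apply u, h])
    obtain ⟨a, b, c, hab, hac, hbc, hxa, hxb, hxc⟩ :
        ∃ a b c : Fin 4, a ≠ b ∧ a ≠ c ∧ b ≠ c ∧ x₀ ∉ B a ∧ x₀ ∉ B b ∧ x₀ ∉ B c := by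
      by_cases h1 : x₀ ∈ B 0
      · exact ⟨1, 2, 3, by decide, by decide, by decide,
          fun h => hd 0 1 (by decide) x₀ h1 h,
          fun h => hd 0 2 (by decide) x₀ h1 h,
          fun h => hd 0 3 (by decide) x₀ h1 h⟩
      by_cases h2 : x₀ ∈ B 1
      · exact ⟨0, 2, 3, by decide, by decide, by decide, h1,
          fun h => hd 1 2 (by decide) x₀ h2 h,
          fun h => hd 1 3 (by decide) x₀ h2 h⟩
      by_cases h3 : x₀ ∈ B 2
      · exact ⟨0, 1, 3, by decide, by decide, by decide, h1, h2,
          fun h => hd 2 3 (by decide) x₀ h3 h⟩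
      · exact ⟨0, 1, 2, by decide, by decide, by decide, h1, h2, h3⟩
    -- common index within each connected branch set avoiding x₀
    set Idx : Fin N → Fin p := fun u => idx h0 (e u) with hIdx
    have hsame : ∀ i : Fin 4, x₀ ∉ B i → ∀ u ∈ B i, ∀ v ∈ B i, Idx u = Idx v := by
      intro i hxi u hu v hv
      refine reach_eq _ Idx (B i) ?_ ⟨u, hu⟩ ⟨v, hv⟩
        (((hconn i).preconnected) ⟨u, hu⟩ ⟨v, hv⟩)
      intro u' hu' v' hv' hadj'
      exact rel_idx h0 _ _ hadj'
        (hxne u' (fun h => hxi (h ▸ hu')))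
        (hxne v' (fun h => hxi (h ▸ hv')))
    -- the three cross edges
    have hK : ∀ i j : Fin 4, i ≠ j → (SimpleGraph.completeGraph (Fin 4)).Adj i j := by
      intro i j hij; simpa using hij
    obtain ⟨u1, hu1, v1, hv1, h1⟩ := hadj (hK a b hab)
    obtain ⟨u2, hu2, v2, hv2, h2⟩ := hadj (hK a c hac)
    obtain ⟨u3, hu3, v3, hv3, h3⟩ := hadj (hK b c hbc)
    have hxu1 : e u1 ≠ none := hxne u1 (fun h => hxa (h ▸ hu1))
    have hxv1 : e v1 ≠ none := hxne v1 (fun h => hxb (h ▸ hv1))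
    have hxu2 : e u2 ≠ none := hxne u2 (fun h => hxa (h ▸ hu2))
    have hxv2 : e v2 ≠ none := hxne v2 (fun h => hxc (h ▸ hv2))
    have hxu3 : e u3 ≠ none := hxne u3 (fun h => hxb (h ▸ hu3))
    have hxv3 : e v3 ≠ none := hxne v3 (fun h => hxc (h ▸ hv3))
    set i : Fin p := Idx u1 with hi
    set wc : Fin N := e.symm (some (i, none)) with hwc
    -- all six endpoints have index i
    have eq_v1 : Idx v1 = i := (rel_idx h0 _ _ h1 hxu1 hxv1).symm
    have eq_u2 : Idx u2 = i := hsame a hxa u2 hu2 u1 hu1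
    have eq_v2 : Idx v2 = i := (rel_idx h0 _ _ h2 hxu2 hxv2).symm.trans eq_u2
    have eq_u3 : Idx u3 = i := (hsame b hxb u3 hu3 v1 hv1).trans eq_v1
    have eq_v3 : Idx v3 = i := (rel_idx h0 _ _ h3 hxu3 hxv3).symm.trans eq_u3
    -- each edge puts the center wc into one of its two branch sets
    have key : ∀ (u v : Fin N), Rel (e u) (e v) → e u ≠ none → e v ≠ none →
        Idx u = i → Idx v = i → u = wc ∨ v = wc := by
      intro u v hr hu hv hiu hiv
      rcases rel_center h0 _ _ hr hu hv with h | h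
      · left
        rw [← e.symm_apply_apply u, h, show idx h0 (e u) = i from hiu, hwc]
      · right
        rw [← e.symm_apply_apply v, h, show idx h0 (e v) = i from hiv, hwc]
    have k1 : wc ∈ B a ∨ wc ∈ B b := by
      rcases key u1 v1 h1 hxu1 hxv1 rfl eq_v1 with h | h
      · exact Or.inl (h ▸ hu1)
      · exact Or.inr (h ▸ hv1)
    have k2 : wc ∈ B a ∨ wc ∈ B c := by
      rcases key u2 v2 h2 hxu2 hxv2 eq_u2 eq_v2 with h | h
      · exact Or.inl (h ▸ hu2)
      · exact Or.inr (h ▸ hv2)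
    have k3 : wc ∈ B b ∨ wc ∈ B c := by
      rcases key u3 v3 h3 hxu3 hxv3 eq_u3 eq_v3 with h | h
      · exact Or.inl (h ▸ hu3)
      · exact Or.inr (h ▸ hv3)
    rcases k1 with h | h <;> rcases k2 with h' | h' <;> rcases k3 with h'' | h'' <;>
      first
        | exact hd a b hab wc (by assumption) (by assumption)
        | exact hd a c hac wc (by assumption) (by assumption)
        | exact hd b c hbc wc (by assumption) (by assumption)
  · intro u v huv
    have heuv : e u ≠ e v := fun h => huv (e.injective h)
    rcases sees_aux m (e u) (e v) heuv with h | ⟨c, h1, h2, h3⟩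
    · exact Or.inl h
    · refine Or.inr ⟨e.symm c, ?_, ?_, ?_⟩
      · show Rel (e u) (e (e.symm c)); rw [he]; exact h1
      · show Rel (e v) (e (e.symm c)); rw [he]; exact h2
      · show L m (e u) (e (e.symm c)) ≠ L m (e v) (e (e.symm c))
        rw [he]; exact h3
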